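/- arXiv:2412.12657 — 3 statements merged into one kernel-verified Lean document; each statement's English description precedes it below -/
import Mathlib

section
/- Let G(x,y) = ln(1/|x-y|) + ln(max(|x|,1)) + ln(max(|y|,1)) and for a Möbius transformation ψ of the Riemann sphere define φ(x) = ln(|ψ'(x)|² · max(|ψ(x)|,1)^{-4} / max(|x|,1)^{-4}). Then for all distinct x, y (in the domain where everything is defined), G(ψ(x), ψ(y)) = G(x,y) - (1/4)(φ(x) + φ(y)). -/
/-- The Green function of the Laplacian on the Riemann sphere with metric
`|z|₊^{-4}|dz|²`: `G(x,y) = ln(1/|x-y|) + ln(max(|x|,1)) + ln(max(|y|,1))`. -/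
noncomputable def sphereGreen (x y : ℂ) : ℝ :=
  Real.log (1 / ‖x - y‖) + Real.log (max (‖x‖) 1)
    + Real.log (max (‖y‖) 1)

/-- Transformation of the sphere Green function under a Möbius map
`ψ(z) = (az+b)/(cz+d)` (with `ad - bc ≠ 0`, derivative `ψ'(z) = (ad-bc)/(cz+d)²`):
`G(ψ(x), ψ(y)) = G(x,y) - (1/4)(φ(x) + φ(y))` where
`φ(x) = ln(|ψ'(x)|² · max(|ψ(x)|,1)^{-4} / max(|x|,1)^{-4})`. -/
theorem sphereGreen_mobius (a b c d : ℂ) (habcd : a * d - b * c ≠ 0)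
    (x y : ℂ) (hx : c * x + d ≠ 0) (hy : c * y + d ≠ 0) (hxy : x ≠ y) :
    let ψ : ℂ → ℂ := fun z => (a * z + b) / (c * z + d)
    let ψ' : ℂ → ℂ := fun z => (a * d - b * c) / (c * z + d) ^ 2
    let φ : ℂ → ℝ := fun z =>
      Real.log ((‖ψ' z‖) ^ 2 * (max (‖ψ z‖) 1) ^ (-4 : ℤ)
        / (max (‖z‖) 1) ^ (-4 : ℤ))
    sphereGreen (ψ x) (ψ y) = sphereGreen x y - (1 / 4) * (φ x + φ y) := by
  intro ψ ψ' φ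
  have hxy' : x - y ≠ 0 := sub_ne_zero.mpr hxy
  have hA : (0:ℝ) < ‖a * d - b * c‖ := norm_pos_iff.mpr habcd
  have hP : (0:ℝ) < ‖c * x + d‖ := norm_pos_iff.mpr hx
  have hQ : (0:ℝ) < ‖c * y + d‖ := norm_pos_iff.mpr hy
  have hD : (0:ℝ) < ‖x - y‖ := norm_pos_iff.mpr hxy'
  have hX : (0:ℝ) < max (‖x‖) 1 := lt_of_lt_of_le one_pos (le_max_right _ _)
  have hY : (0:ℝ) < max (‖y‖) 1 := lt_of_lt_of_le one_pos (le_max_right _ _)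
  have hU : (0:ℝ) < max (‖ψ x‖) 1 := lt_of_lt_of_le one_pos (le_max_right _ _)
  have hV : (0:ℝ) < max (‖ψ y‖) 1 := lt_of_lt_of_le one_pos (le_max_right _ _)
  have hsub : ‖ψ x - ψ y‖
      = ‖a * d - b * c‖ * ‖x - y‖
        / (‖c * x + d‖ * ‖c * y + d‖) := by
    have h : ψ x - ψ y = (a * d - b * c) * (x - y) / ((c * x + d) * (c * y + d)) := by
      simp only [ψ]
      rw [div_sub_div _ _ hx hy]
      ring
    rw [h, norm_div, norm_mul, norm_mul]
  have hpsi'x : ‖ψ' x‖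
      = ‖a * d - b * c‖ / (‖c * x + d‖) ^ 2 := by
    simp [ψ', norm_div, norm_pow]
  have hpsi'y : ‖ψ' y‖
      = ‖a * d - b * c‖ / (‖c * y + d‖) ^ 2 := by
    simp [ψ', norm_div, norm_pow]
  have hφ : ∀ (P U X : ℝ), 0 < P → 0 < U → 0 < X →
      Real.log ((‖a*d-b*c‖ / P ^ 2) ^ 2 * U ^ (-4 : ℤ) / X ^ (-4 : ℤ))
        = 2 * Real.log (‖a*d-b*c‖) - 4 * Real.log P - 4 * Real.log U
          + 4 * Real.log X := by
    intro P U X hP' hU' hX'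
    rw [Real.log_div (by positivity) (by positivity), Real.log_mul (by positivity) (by positivity),
      Real.log_pow, Real.log_zpow, Real.log_zpow,
      Real.log_div (ne_of_gt hA) (by positivity), Real.log_pow]
    push_cast
    ring
  simp only [sphereGreen, φ]
  rw [hsub, hpsi'x, hpsi'y, hφ _ _ _ hP hU hX, hφ _ _ _ hQ hV hY,
    one_div, Real.log_inv, one_div, Real.log_inv,
    Real.log_div (by positivity) (by positivity),
    Real.log_mul (ne_of_gt hA) (ne_of_gt hD), Real.log_mul (ne_of_gt hP) (ne_of_gt hQ)]
  ring
end

section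
/- Let A_n (n ∈ ℤ) be operators satisfying the Heisenberg commutation relations [⟨u,A_n⟩, ⟨v,A_m⟩] = ⟨u,v⟩(n/2)δ_{n,-m} on a space with a Hermitian inner product such that A_n* = A_{-n} for n ≠ 0 and A_0* = A_0 - iQ (componentwise in an orthonormal basis). Define the Virasoro modes L_n = -iQ(n+1)·A_n + Σ_{m∈ℤ} :⟨A_{n-m}, A_m⟩: where the normal ordering puts operators with negative index to the left. Then [L_n, L_m] = (n-m)L_{n+m} + (c/12)(n³-n)δ_{n,-m} with central charge c = r + 6⟨Q,Q⟩. -/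
open scoped BigOperators

/-- The Segal–Sugawara Virasoro modes built from a (rank `r`) Heisenberg family
`A : ℤ → Fin r → End(V)` with background charge `Q ∈ ℝ^r`:
`L_n = -iQ(n+1)·A_n + Σ_{m∈ℤ} :⟨A_{n-m}, A_m⟩:`, where the normally ordered product
puts the operator with negative index on the left. -/
noncomputable def ssVirasoro {V : Type*} [AddCommGroup V] [Module ℂ V] {r : ℕ}
    (Q : Fin r → ℝ) (A : ℤ → Fin r → V →ₗ[ℂ] V) (n : ℤ) (v : V) : V :=
  (-Complex.I * ((n : ℂ) + 1)) • (∑ j, (Q j : ℂ) • A n j v)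
    + ∑ᶠ m : ℤ, if n - m < 0 then ∑ j, A (n - m) j (A m j v)
        else ∑ j, A m j (A (n - m) j v)

set_option linter.unusedSectionVars false
set_option linter.unusedVariables false
set_option maxHeartbeats 1000000
namespace SSAux

variable {V : Type*} [AddCommGroup V] [Module ℂ V] {r : ℕ}
variable (A : ℤ → Fin r → V →ₗ[ℂ] V)

/-- unordered pair product -/
noncomputable def Pp (p q : ℤ) (w : V) : V := ∑ j, A p j (A q j w)

/-- normally ordered pair -/
noncomputable def Tt (n k : ℤ) (w : V) : V :=
  if n - k < 0 then Pp A (n - k) k w else Pp A k (n - k) w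

noncomputable def linQ (Q : Fin r → ℝ) (n : ℤ) (w : V) : V :=
  (-Complex.I * ((n : ℂ) + 1)) • ∑ j, (Q j : ℂ) • A n j w

/-- annihilation bound -/
def Ann (N : ℤ) (w : V) : Prop := ∀ k ≥ N, ∀ j, A k j w = 0

variable {A}

section basic

lemma Pp_add (p q : ℤ) (x y : V) : Pp A p q (x + y) = Pp A p q x + Pp A p q y := by
  simp [Pp, Finset.sum_add_distrib]

lemma Pp_smul (p q : ℤ) (c : ℂ) (x : V) : Pp A p q (c • x) = c • Pp A p q x := by
  simp [Pp, Finset.smul_sum]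

lemma Tt_add (n k : ℤ) (x y : V) : Tt A n k (x + y) = Tt A n k x + Tt A n k y := by
  unfold Tt; split <;> simp [Pp_add]

lemma Tt_smul (n k : ℤ) (c : ℂ) (x : V) : Tt A n k (c • x) = c • Tt A n k x := by
  unfold Tt; split <;> simp [Pp_smul]

lemma Tt_sum {ι : Type*} (n k : ℤ) (s : Finset ι) (f : ι → V) :
    Tt A n k (∑ i ∈ s, f i) = ∑ i ∈ s, Tt A n k (f i) := by
  classical
  induction s using Finset.induction with
  | empty => unfold Tt; split <;> simp [Pp]
  | @insert _ _ h ih => simp [Finset.sum_insert h, Tt_add, ih]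

end basic

section comm

variable (hcomm : ∀ (n m : ℤ) (i j : Fin r) (v : V),
      A n i (A m j v) - A m j (A n i v)
        = if n = -m ∧ i = j then ((n : ℂ) / 2) • v else 0)

include hcomm

lemma Acomm (p q : ℤ) (i j : Fin r) (w : V) :
    A p i (A q j w) = A q j (A p i w) + (if p = -q ∧ i = j then ((p : ℂ)/2) • w else 0) := by
  have := hcomm p q i j w
  rw [sub_eq_iff_eq_add'] at this
  rw [this]

lemma ann_apply {N : ℤ} {w : V} (h : Ann A N w) (q : ℤ) (i : Fin r) :
    Ann A (max N (1 - q)) (A q i w) := by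
  intro k hk j
  have h1 : k ≥ N := le_trans (le_max_left _ _) hk
  have h2 : k ≥ 1 - q := le_trans (le_max_right _ _) hk
  rw [Acomm hcomm, h k h1 j, if_neg, map_zero, add_zero]
  rintro ⟨rfl, -⟩; omega

omit hcomm in
lemma ann_mono {N N' : ℤ} {w : V} (h : Ann A N w) (hle : N ≤ N') : Ann A N' w :=
  fun k hk j => h k (le_trans hle hk) j

omit hcomm in
lemma ann_add {N : ℤ} {x y : V} (hx : Ann A N x) (hy : Ann A N y) : Ann A N (x + y) := by
  intro k hk j; rw [map_add, hx k hk j, hy k hk j, add_zero]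

omit hcomm in
lemma ann_smul {N : ℤ} {x : V} (c : ℂ) (hx : Ann A N x) : Ann A N (c • x) := by
  intro k hk j; rw [map_smul, hx k hk j, smul_zero]

omit hcomm in
lemma ann_zero (N : ℤ) : Ann A N (0 : V) := fun k _ j => map_zero _

omit hcomm in
lemma ann_sum {ι : Type*} {N : ℤ} (s : Finset ι) (f : ι → V)
    (h : ∀ i ∈ s, Ann A N (f i)) : Ann A N (∑ i ∈ s, f i) := by
  classical
  induction s using Finset.induction with
  | empty => simpa using ann_zero N
  | @insert _ _ hmem ih =>
      rw [Finset.sum_insert hmem]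
      exact ann_add (h _ (Finset.mem_insert_self _ _))
        (ih fun i hi => h i (Finset.mem_insert_of_mem hi))

section support

omit hcomm in
lemma Tt_eq_zero {N n : ℤ} {w : V} (h : Ann A N w) (hN : 1 ≤ N) (hn : n < N)
    {k : ℤ} (hk : N ≤ k ∨ k ≤ n - N) : Tt A n k w = 0 := by
  rcases hk with hk | hk
  · have : n - k < 0 := by omega
    rw [Tt, if_pos this, Pp]
    refine Finset.sum_eq_zero fun j _ => ?_
    rw [h k hk j, map_zero]
  · have : ¬ n - k < 0 := by omega
    rw [Tt, if_neg this, Pp]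
    refine Finset.sum_eq_zero fun j _ => ?_
    rw [h (n - k) (by omega) j, map_zero]

omit hcomm in
lemma ssV_eq (Q : Fin r → ℝ) {N n : ℤ} {w : V} (h : Ann A N w) (hN : 1 ≤ N) (hn : n < N)
    {s : Finset ℤ} (hs : Finset.Ioo (n - N) N ⊆ s) :
    ssVirasoro Q A n w = linQ A Q n w + ∑ k ∈ s, Tt A n k w := by
  have hfin : ∑ᶠ k : ℤ, Tt A n k w = ∑ k ∈ Finset.Ioo (n - N) N, Tt A n k w := by
    refine finsum_eq_finset_sum_of_support_subset _ fun k hk => ?_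
    simp only [Function.mem_support] at hk
    simp only [Finset.coe_Ioo, Set.mem_Ioo]
    by_contra hc
    exact hk (Tt_eq_zero h hN hn (by omega))
  have hext : ∑ k ∈ Finset.Ioo (n - N) N, Tt A n k w = ∑ k ∈ s, Tt A n k w := by
    refine (Finset.sum_subset hs fun k _ hk => ?_)
    rw [Finset.mem_Ioo] at hk
    exact Tt_eq_zero h hN hn (by omega)
  show _ + (∑ᶠ k : ℤ, Tt A n k w) = linQ A Q n w + _
  rw [hfin, hext]; rfl

lemma ann_Pp {N p q : ℤ} {w : V} (h : Ann A N w) :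
    Ann A (max (max N (1 - q)) (1 - p)) (Pp A p q w) := by
  refine ann_sum _ _ fun j _ => ?_
  exact ann_apply hcomm (ann_apply hcomm h q j) p j

lemma ann_Tt {N n k : ℤ} {w : V} (h : Ann A N w) :
    Ann A (max (max N (1 - k)) (1 - (n - k))) (Tt A n k w) := by
  rw [Tt]; split
  · exact ann_mono (ann_Pp hcomm h) (by omega)
  · exact ann_mono (ann_Pp hcomm h) (by omega)

lemma ann_linQ (Q : Fin r → ℝ) {N : ℤ} {w : V} (h : Ann A N w) (n : ℤ) :
    Ann A (max N (1 - n)) (linQ A Q n w) := by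
  exact ann_smul _ (ann_sum _ _ fun j _ => ann_smul _ (ann_apply hcomm h n j))

end support


section comm4sec

omit hcomm in
lemma sum_delta (P : Prop) [Decidable P] (i : Fin r) (X : Fin r → V) :
    ∑ j, (if P ∧ i = j then X j else 0) = if P then X i else 0 := by
  by_cases hP : P <;> simp [hP]

omit hcomm in
lemma sum_ite_const (P : Prop) [Decidable P] (X : Fin r → V) :
    ∑ i, (if P then X i else 0) = if P then ∑ i, X i else 0 := by
  by_cases hP : P <;> simp [hP]

lemma comm4' (a b c d : ℤ) (i j : Fin r) (v : V) :
    A a i (A b i (A c j (A d j v))) - A c j (A d j (A a i (A b i v)))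
      = (if b = -d ∧ i = j then ((b : ℂ)/2) • A a i (A c j v) else 0)
      + (if b = -c ∧ i = j then ((b : ℂ)/2) • A a i (A d j v) else 0)
      + (if a = -d ∧ i = j then ((a : ℂ)/2) • A c j (A b i v) else 0)
      + (if a = -c ∧ i = j then ((a : ℂ)/2) • A d j (A b i v) else 0) := by
  have h1 := Acomm hcomm b d i j v
  have h2 := Acomm hcomm b c i j (A d j v)
  have h3 := Acomm hcomm a d i j (A b i v)
  have h4 := Acomm hcomm a c i j (A d j (A b i v))
  rw [h2, h1, map_add, map_add, map_add, h4]
  rw [show A a i (A d j (A b i v)) = _ from h3]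
  simp only [apply_ite (A a i), apply_ite (A c j), map_smul, map_zero, map_add]
  abel

lemma comm4 (a b c d : ℤ) (v : V) :
    Pp A a b (Pp A c d v) - Pp A c d (Pp A a b v)
      = (if b = -d then ((b : ℂ)/2) • Pp A a c v else 0)
      + (if b = -c then ((b : ℂ)/2) • Pp A a d v else 0)
      + (if a = -d then ((a : ℂ)/2) • Pp A c b v else 0)
      + (if a = -c then ((a : ℂ)/2) • Pp A d b v else 0) := by
  have expand1 : Pp A a b (Pp A c d v) = ∑ i, ∑ j, A a i (A b i (A c j (A d j v))) := by
    rw [Pp]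
    refine Finset.sum_congr rfl fun i _ => ?_
    rw [Pp, map_sum, map_sum]
  have expand2 : Pp A c d (Pp A a b v) = ∑ i, ∑ j, A c j (A d j (A a i (A b i v))) := by
    rw [Pp]
    rw [Finset.sum_comm]
    refine Finset.sum_congr rfl fun i _ => ?_
    rw [Pp, map_sum, map_sum]
  rw [expand1, expand2, ← Finset.sum_sub_distrib]
  have : ∀ i ∈ Finset.univ, (∑ j, A a i (A b i (A c j (A d j v))) - ∑ j, A c j (A d j (A a i (A b i v))))
      = (if b = -d then ((b : ℂ)/2) • A a i (A c i v) else 0)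
      + (if b = -c then ((b : ℂ)/2) • A a i (A d i v) else 0)
      + (if a = -d then ((a : ℂ)/2) • A c i (A b i v) else 0)
      + (if a = -c then ((a : ℂ)/2) • A d i (A b i v) else 0) := by
    intro i _
    rw [← Finset.sum_sub_distrib]
    rw [Finset.sum_congr rfl (fun j _ => comm4' hcomm a b c d i j v)]
    rw [Finset.sum_add_distrib, Finset.sum_add_distrib, Finset.sum_add_distrib]
    rw [sum_delta, sum_delta, sum_delta, sum_delta]
  rw [Finset.sum_congr rfl this]
  rw [Finset.sum_add_distrib, Finset.sum_add_distrib, Finset.sum_add_distrib]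
  rw [sum_ite_const, sum_ite_const, sum_ite_const, sum_ite_const]
  simp only [Pp, Finset.smul_sum]

end comm4sec


section swaps

omit hcomm in
lemma Tt_zero (n k : ℤ) : Tt A n k (0 : V) = 0 := by
  unfold Tt Pp; split <;> simp

omit hcomm in
lemma sum_delta' (P : Prop) [Decidable P] (j : Fin r) (X : Fin r → V) :
    ∑ i, (if P ∧ i = j then X i else 0) = if P then X j else 0 := by
  by_cases hP : P <;> simp [hP]

lemma Pp_swap (p q : ℤ) (w : V) :
    Pp A p q w = Pp A q p w + (if p = -q then ((r : ℂ) * ((p : ℂ)/2)) • w else 0) := by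
  unfold Pp
  rw [Finset.sum_congr rfl (fun i _ => Acomm hcomm p q i i w), Finset.sum_add_distrib]
  congr 1
  have : ∀ i : Fin r, (if p = -q ∧ i = i then ((p:ℂ)/2) • w else 0)
      = (if p = -q then ((p:ℂ)/2) • w else 0) := by intro i; simp
  rw [Finset.sum_congr rfl (fun i _ => this i)]
  by_cases hpq : p = -q
  · simp [hpq, Finset.sum_const, mul_smul, Nat.cast_smul_eq_nsmul]
  · simp [hpq]

lemma Tt_eq_Pp {n : ℤ} (hn : n ≠ 0) (k : ℤ) (w : V) :
    Tt A n k w = Pp A (n - k) k w := by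
  unfold Tt; split
  · rfl
  · rw [Pp_swap hcomm (n - k) k w, if_neg (by omega), add_zero]

lemma Tt_symm (t j : ℤ) (w : V) : Tt A t (t - j) w = Tt A t j w := by
  unfold Tt
  have h : t - (t - j) = j := by omega
  rw [h]
  by_cases h1 : j < 0 <;> by_cases h2 : t - j < 0
  · rw [if_pos h1, if_pos h2, Pp_swap hcomm j (t - j) w, if_neg (by omega), add_zero]
  · rw [if_pos h1, if_neg h2]
  · rw [if_neg h1, if_pos h2]
  · rw [if_neg h1, if_neg h2, Pp_swap hcomm (t - j) j w]
    by_cases h3 : t - j = -j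
    · rw [if_pos h3]
      have : t - j = 0 := by omega
      rw [this]; norm_num
    · rw [if_neg h3, add_zero]

/-- normal ordering of a pair with given index sum -/
lemma Pp_NO {p q t : ℤ} (hpq : p + q = t) (w : V) :
    Pp A p q w = Tt A t q w
      + (if 0 ≤ p ∧ p = -q then ((r : ℂ) * ((p : ℂ)/2)) • w else 0) := by
  have hp : t - q = p := by omega
  unfold Tt; rw [hp]
  by_cases h : p < 0
  · rw [if_pos h, if_neg (by omega), add_zero]
  · rw [if_neg h, Pp_swap hcomm p q w]
    congr 1
    by_cases h2 : p = -q
    · rw [if_pos h2, if_pos ⟨by omega, h2⟩]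
    · rw [if_neg h2, if_neg (by tauto)]

/-- commutator of a pair with a single mode -/
lemma PA_comm (a b t : ℤ) (j : Fin r) (w : V) :
    Pp A a b (A t j w) - A t j (Pp A a b w)
      = (if b = -t then ((b:ℂ)/2) • A a j w else 0)
      + (if a = -t then ((a:ℂ)/2) • A b j w else 0) := by
  unfold Pp
  rw [map_sum, ← Finset.sum_sub_distrib]
  have key : ∀ i : Fin r, A a i (A b i (A t j w)) - A t j (A a i (A b i w))
      = (if b = -t ∧ i = j then ((b:ℂ)/2) • A a i w else 0)
      + (if a = -t ∧ i = j then ((a:ℂ)/2) • A b i w else 0) := by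
    intro i
    have h1 := Acomm hcomm b t i j w
    have h2 := Acomm hcomm a t i j (A b i w)
    rw [h1, map_add, h2]
    simp only [apply_ite (A a i), map_smul, map_zero]
    abel
  rw [Finset.sum_congr rfl (fun i _ => key i), Finset.sum_add_distrib,
    sum_delta', sum_delta']

lemma TA_comm_pt (n t k : ℤ) (j : Fin r) (w : V) :
    Tt A n k (A t j w) - A t j (Tt A n k w)
      = (if k = -t then ((-t:ℂ)/2) • A (n+t) j w else 0)
      + (if k = n + t then ((-t:ℂ)/2) • A (n+t) j w else 0) := by
  have e1 : (if k = -t then ((k:ℂ)/2) • A (n-k) j w else 0)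
      = (if k = -t then ((-t:ℂ)/2) • A (n+t) j w else 0) := by
    by_cases h : k = -t
    · subst h; rw [if_pos rfl, if_pos rfl, sub_neg_eq_add]; push_cast; ring_nf
    · simp [h]
  have e2 : (if n - k = -t then ((((n-k : ℤ)):ℂ)/2) • A k j w else 0)
      = (if k = n + t then ((-t:ℂ)/2) • A (n+t) j w else 0) := by
    by_cases h : k = n + t
    · subst h
      rw [if_pos (by omega), if_pos rfl, show n - (n+t) = -t from by omega]
      push_cast; ring_nf
    · rw [if_neg (by omega), if_neg h]
  unfold Tt; split
  · rw [PA_comm hcomm (n-k) k t j w, e1, e2]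
  · rw [PA_comm hcomm k (n-k) t j w, e2, e1, add_comm]

end swaps


section collapse

lemma TA_comm {n t : ℤ} (j : Fin r) {s : Finset ℤ} (h1 : -t ∈ s) (h2 : n + t ∈ s) (w : V) :
    ∑ k ∈ s, (Tt A n k (A t j w) - A t j (Tt A n k w)) = (-(t:ℂ)) • A (n+t) j w := by
  rw [Finset.sum_congr rfl (fun k _ => TA_comm_pt hcomm n t k j w), Finset.sum_add_distrib]
  rw [Finset.sum_ite_eq' s (-t) (fun _ => ((-t:ℂ)/2) • A (n+t) j w),
      Finset.sum_ite_eq' s (n+t) (fun _ => ((-t:ℂ)/2) • A (n+t) j w),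
      if_pos h1, if_pos h2]
  module

end collapse

section ord

variable (A) in
noncomputable def ordL (n k : ℤ) : ℤ := if n - k < 0 then n - k else k
variable (A) in
noncomputable def ordR (n k : ℤ) : ℤ := if n - k < 0 then k else n - k

omit hcomm in
lemma Tt_eq_ord (n k : ℤ) (w : V) : Tt A n k w = Pp A (ordL n k) (ordR n k) w := by
  unfold Tt ordL ordR; split_ifs <;> rfl

omit hcomm in
lemma ordL_add_ordR (n k : ℤ) : ordL n k + ordR n k = n := by
  unfold ordL ordR; split_ifs <;> omega

/-- the key collapse of the `l`-sum of commutators of two quadratics -/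
lemma sum_l_collapse {m : ℤ} (hm : m ≠ 0) (n k : ℤ) {s : Finset ℤ} (v : V)
    (h1 : -(ordR n k) ∈ s) (h2 : m + ordR n k ∈ s)
    (h3 : -(ordL n k) ∈ s) (h4 : m + ordL n k ∈ s) :
    ∑ l ∈ s, (Tt A n k (Tt A m l v) - Tt A m l (Tt A n k v))
      = ((ordR n k : ℂ)) • Pp A (ordL n k) (m + ordR n k) v
        + ((ordL n k : ℂ)) • Pp A (m + ordL n k) (ordR n k) v := by
  set a := ordL n k with ha
  set b := ordR n k with hb
  have step1 : ∀ l, Tt A n k (Tt A m l v) - Tt A m l (Tt A n k v)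
      = Pp A a b (Pp A (m - l) l v) - Pp A (m - l) l (Pp A a b v) := by
    intro l
    rw [Tt_eq_ord, Tt_eq_Pp hcomm hm, Tt_eq_Pp hcomm hm, Tt_eq_ord]
  have step2 : ∀ l, Pp A a b (Pp A (m - l) l v) - Pp A (m - l) l (Pp A a b v)
      = (if l = -b then ((b : ℂ)/2) • Pp A a (m - l) v else 0)
      + (if l = m + b then ((b : ℂ)/2) • Pp A a l v else 0)
      + (if l = -a then ((a : ℂ)/2) • Pp A (m - l) b v else 0)
      + (if l = m + a then ((a : ℂ)/2) • Pp A l b v else 0) := by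
    intro l
    rw [comm4 hcomm a b (m - l) l v]
    congr 1
    congr 1
    congr 1
    · congr 1; apply propext; omega
    · congr 1; apply propext; omega
    · congr 1; apply propext; omega
    · congr 1; apply propext; omega
  rw [Finset.sum_congr rfl (fun l _ => (step1 l).trans (step2 l))]
  rw [Finset.sum_add_distrib, Finset.sum_add_distrib, Finset.sum_add_distrib]
  rw [Finset.sum_ite_eq' s (-b), Finset.sum_ite_eq' s (m+b),
      Finset.sum_ite_eq' s (-a), Finset.sum_ite_eq' s (m+a),
      if_pos h1, if_pos h2, if_pos h3, if_pos h4]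
  rw [show m - -b = m + b from by omega, show m - -a = m + a from by omega]
  module

end ord


section arith

omit hcomm in
lemma sum_Icc_id (v : ℕ) : ∑ j ∈ Finset.Icc (0:ℤ) (v:ℤ), (j:ℂ) = (v:ℂ)*((v:ℂ)+1)/2 := by
  induction v with
  | zero => simp
  | succ v ih =>
      have hins : Finset.Icc (0:ℤ) ((v:ℤ)+1) = insert ((v:ℤ)+1) (Finset.Icc (0:ℤ) (v:ℤ)) := by
        ext x; simp only [Finset.mem_Icc, Finset.mem_insert]; omega
      rw [show ((v+1 : ℕ) : ℤ) = (v:ℤ) + 1 from by push_cast; ring, hins,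
        Finset.sum_insert (by simp [Finset.mem_Icc]), ih]
      push_cast; ring

omit hcomm in
lemma sum_Icc_sq (v : ℕ) : ∑ j ∈ Finset.Icc (0:ℤ) (v:ℤ), ((j:ℂ))^2
    = (v:ℂ)*((v:ℂ)+1)*(2*(v:ℂ)+1)/6 := by
  induction v with
  | zero => simp
  | succ v ih =>
      have hins : Finset.Icc (0:ℤ) ((v:ℤ)+1) = insert ((v:ℤ)+1) (Finset.Icc (0:ℤ) (v:ℤ)) := by
        ext x; simp only [Finset.mem_Icc, Finset.mem_insert]; omega
      rw [show ((v+1 : ℕ) : ℤ) = (v:ℤ) + 1 from by push_cast; ring, hins,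
        Finset.sum_insert (by simp [Finset.mem_Icc]), ih]
      push_cast; ring

omit hcomm in
lemma cubic1 {n : ℤ} (hn : 0 < n) :
    ∑ j ∈ Finset.Icc (0:ℤ) n, (j:ℂ)*((n:ℂ)-(j:ℂ)) = ((n:ℂ)^3 - n)/6 := by
  obtain ⟨v, rfl⟩ : ∃ v : ℕ, n = (v:ℤ) := ⟨n.toNat, (Int.toNat_of_nonneg hn.le).symm⟩
  have expand : ∑ j ∈ Finset.Icc (0:ℤ) (v:ℤ), (j:ℂ)*(((v:ℤ):ℂ)-(j:ℂ))
      = ((v:ℤ):ℂ) * (∑ j ∈ Finset.Icc (0:ℤ) (v:ℤ), (j:ℂ))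
        - ∑ j ∈ Finset.Icc (0:ℤ) (v:ℤ), ((j:ℂ))^2 := by
    rw [Finset.mul_sum, ← Finset.sum_sub_distrib]
    exact Finset.sum_congr rfl fun j _ => by ring
  rw [expand, sum_Icc_id v, sum_Icc_sq v]
  push_cast; ring

omit hcomm in
lemma cubic2 {n : ℤ} (hn : n < 0) :
    ∑ j ∈ Finset.Icc (n+1) (0:ℤ), ((n:ℂ)-(j:ℂ))*(-(j:ℂ)) = ((n:ℂ)^3 - n)/6 := by
  have hv : ((-n-1).toNat : ℤ) = -n-1 := Int.toNat_of_nonneg (by omega)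
  obtain ⟨v, rfl⟩ : ∃ v : ℕ, n = -(v:ℤ)-1 := ⟨(-n-1).toNat, by omega⟩
  rw [show -(v:ℤ) - 1 + 1 = -(v:ℤ) from by ring]
  have hre : ∑ j ∈ Finset.Icc (-(v:ℤ)) 0, ((((-(v:ℤ)-1 : ℤ)):ℂ)-(j:ℂ))*(-(j:ℂ))
      = ∑ i ∈ Finset.Icc (0:ℤ) (v:ℤ), ((((-(v:ℤ)-1 : ℤ)):ℂ)+(i:ℂ))*((i:ℂ)) := by
    refine Finset.sum_nbij' (fun j => -j) (fun i => -i) ?_ ?_ ?_ ?_ ?_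
    · intro a ha; simp only [Finset.mem_Icc] at *; omega
    · intro a ha; simp only [Finset.mem_Icc] at *; omega
    · intro a ha; simp
    · intro a ha; simp
    · intro a ha; push_cast; ring
  have expand : ∑ i ∈ Finset.Icc (0:ℤ) (v:ℤ), ((((-(v:ℤ)-1 : ℤ)):ℂ)+(i:ℂ))*((i:ℂ))
      = (((-(v:ℤ)-1 : ℤ)):ℂ) * (∑ i ∈ Finset.Icc (0:ℤ) (v:ℤ), (i:ℂ))
        + ∑ i ∈ Finset.Icc (0:ℤ) (v:ℤ), ((i:ℂ))^2 := by
    rw [Finset.mul_sum, ← Finset.sum_add_distrib]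
    exact Finset.sum_congr rfl fun i _ => by ring
  show ∑ j ∈ Finset.Icc (-(v:ℤ)) 0, ((((-(v:ℤ)-1 : ℤ)):ℂ)-(j:ℂ))*(-(j:ℂ)) = _
  rw [hre, expand, sum_Icc_id v, sum_Icc_sq v]
  push_cast; ring

end arith


section central

variable (r) in
noncomputable def scal (n m j : ℤ) : ℂ :=
  (if 0 ≤ n - j ∧ n - j = -(m + j) then (j:ℂ) * ((r:ℂ) * (((n-j : ℤ)):ℂ)/2) else 0)
  + (if 0 ≤ m + (n - j) ∧ m + (n - j) = -j then
      (((n-j : ℤ)):ℂ) * ((r:ℂ) * (((m + (n-j) : ℤ)):ℂ)/2) else 0)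

omit hcomm in
lemma central_sum {n m K an am : ℤ} (hm : m ≠ 0)
    (hn1 : n ≤ an) (hn2 : -an ≤ n) (hm1 : m ≤ am) (hm2 : -am ≤ m)
    (hK : an + am + 1 ≤ K) :
    ∑ j ∈ Finset.Icc (n+1) K, scal r n m j + ∑ j ∈ Finset.Icc 0 (n+K), scal r n m j
      = if n = -m then (r:ℂ) * ((n:ℂ)^3 - (n:ℂ))/12 else 0 := by
  by_cases hnm : n = -m
  · obtain rfl : m = -n := by omega
    have hn0 : n ≠ 0 := by omega
    rw [if_pos (by omega)]
    have hscal : ∀ j : ℤ, scal r n (-n) j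
        = (if j ≤ n then (r:ℂ)/2 * ((j:ℂ)*((n:ℂ)-(j:ℂ))) else 0)
          + (if j ≤ 0 then (r:ℂ)/2 * (((n:ℂ)-(j:ℂ))*(-(j:ℂ))) else 0) := by
      intro j
      unfold scal
      congr 1
      · rcases le_or_gt j n with h | h
        · rw [if_pos ⟨by omega, by omega⟩, if_pos h]; push_cast; ring
        · rw [if_neg (by omega), if_neg (by omega)]
      · rcases le_or_gt j 0 with h | h
        · rw [if_pos ⟨by omega, by omega⟩, if_pos h]; push_cast; ring
        · rw [if_neg (by omega), if_neg (by omega)]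
    simp only [hscal]
    rw [Finset.sum_add_distrib, Finset.sum_add_distrib]
    have e1 : ∑ j ∈ Finset.Icc (n+1) K, (if j ≤ n then (r:ℂ)/2 * ((j:ℂ)*((n:ℂ)-(j:ℂ))) else 0) = 0 :=
      Finset.sum_eq_zero fun j hj => by
        rw [Finset.mem_Icc] at hj; rw [if_neg (by omega)]
    have e2 : ∑ j ∈ Finset.Icc 0 (n+K), (if j ≤ 0 then (r:ℂ)/2 * (((n:ℂ)-(j:ℂ))*(-(j:ℂ))) else 0) = 0 :=
      Finset.sum_eq_zero fun j hj => by
        rw [Finset.mem_Icc] at hj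
        rcases eq_or_lt_of_le hj.1 with h | h
        · rw [← h]; simp
        · rw [if_neg (by omega)]
    rw [e1, e2]
    rcases lt_or_gt_of_ne hn0 with hneg | hpos
    · have e3 : ∑ j ∈ Finset.Icc 0 (n+K), (if j ≤ n then (r:ℂ)/2 * ((j:ℂ)*((n:ℂ)-(j:ℂ))) else 0) = 0 :=
        Finset.sum_eq_zero fun j hj => by
          rw [Finset.mem_Icc] at hj; rw [if_neg (by omega)]
      have e4 : ∑ j ∈ Finset.Icc (n+1) K, (if j ≤ 0 then (r:ℂ)/2 * (((n:ℂ)-(j:ℂ))*(-(j:ℂ))) else 0)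
          = (r:ℂ)/2 * (((n:ℂ)^3 - n)/6) := by
        rw [← Finset.sum_subset (Finset.Icc_subset_Icc_right (by omega) :
            Finset.Icc (n+1) (0:ℤ) ⊆ Finset.Icc (n+1) K)]
        · rw [Finset.sum_congr rfl (fun j hj => if_pos (Finset.mem_Icc.mp hj).2),
            ← Finset.mul_sum, cubic2 hneg]
        · intro j hj hj2
          rw [Finset.mem_Icc] at hj; rw [Finset.mem_Icc] at hj2
          rw [if_neg (by omega)]
      rw [e3, e4]; ring
    · have e3 : ∑ j ∈ Finset.Icc (n+1) K, (if j ≤ 0 then (r:ℂ)/2 * (((n:ℂ)-(j:ℂ))*(-(j:ℂ))) else 0) = 0 :=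
        Finset.sum_eq_zero fun j hj => by
          rw [Finset.mem_Icc] at hj; rw [if_neg (by omega)]
      have e4 : ∑ j ∈ Finset.Icc 0 (n+K), (if j ≤ n then (r:ℂ)/2 * ((j:ℂ)*((n:ℂ)-(j:ℂ))) else 0)
          = (r:ℂ)/2 * (((n:ℂ)^3 - n)/6) := by
        rw [← Finset.sum_subset (Finset.Icc_subset_Icc_right (by omega) :
            Finset.Icc (0:ℤ) n ⊆ Finset.Icc 0 (n+K))]
        · rw [Finset.sum_congr rfl (fun j hj => if_pos (Finset.mem_Icc.mp hj).2),
            ← Finset.mul_sum, cubic1 hpos]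
        · intro j hj hj2
          rw [Finset.mem_Icc] at hj; rw [Finset.mem_Icc] at hj2
          rw [if_neg (by omega)]
      rw [e3, e4]; ring
  · rw [if_neg hnm]
    have hz : ∀ j : ℤ, scal r n m j = 0 := by
      intro j; unfold scal
      rw [if_neg (by omega), if_neg (by omega), add_zero]
    simp only [hz, Finset.sum_const_zero, add_zero]

end central


section etil

variable (A) in
noncomputable def Etil (n m : ℤ) (v : V) (j : ℤ) : V :=
  (j:ℂ) • Pp A (n-j) (m+j) v + (((n-j : ℤ)):ℂ) • Pp A (m+(n-j)) j v

variable (A) in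
noncomputable def Etil2 (n m : ℤ) (v : V) (j : ℤ) : V :=
  (j:ℂ) • Tt A (n+m) (m+j) v + (((n-j : ℤ)):ℂ) • Tt A (n+m) j v

omit hcomm in
lemma ord_cases (n k : ℤ) :
    (ordL n k = n - k ∧ ordR n k = k) ∨ (ordL n k = k ∧ ordR n k = n - k) := by
  unfold ordL ordR; split_ifs <;> simp

lemma Etil_decomp (n m j : ℤ) (v : V) :
    Etil A n m v j = Etil2 A n m v j + scal r n m j • v := by
  unfold Etil Etil2 scal
  rw [Pp_NO hcomm (show (n-j) + (m+j) = n+m from by ring),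
      Pp_NO hcomm (show (m+(n-j)) + j = n+m from by ring)]
  by_cases h1 : 0 ≤ n - j ∧ n - j = -(m+j)
  · rw [if_pos h1, if_pos h1]
    by_cases h2 : 0 ≤ m + (n-j) ∧ m + (n-j) = -j
    · rw [if_pos h2, if_pos h2]; module
    · rw [if_neg h2, if_neg h2]; module
  · rw [if_neg h1, if_neg h1]
    by_cases h2 : 0 ≤ m + (n-j) ∧ m + (n-j) = -j
    · rw [if_pos h2, if_pos h2]; module
    · rw [if_neg h2, if_neg h2]; module

lemma Etil2_symm (n m j : ℤ) (v : V) : Etil2 A n m v (n - j) = Etil2 A n m v j := by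
  have ht1 : Tt A (n+m) (m+(n-j)) v = Tt A (n+m) j v := by
    rw [show m+(n-j) = (n+m)-j from by ring]; exact Tt_symm hcomm (n+m) j v
  have ht2 : Tt A (n+m) (n-j) v = Tt A (n+m) (m+j) v := by
    rw [show n-j = (n+m)-(m+j) from by ring]; exact Tt_symm hcomm (n+m) (m+j) v
  unfold Etil2
  rw [ht1, ht2, show n-(n-j) = j from by omega]
  abel

end etil


section master

lemma G3 {n m N N₂ K M an am : ℤ} (hm : m ≠ 0) {v : V} (hv : Ann A N v)
    (hn1 : n ≤ an) (hn2 : -an ≤ n) (hm1 : m ≤ am) (hm2 : -am ≤ m)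
    (hN : an + am + 2 ≤ N)
    (hN₂ : N₂ = N + an + am + 2) (hK : K = N₂ + an + am + 1) (hM : M = K + an + am + 1) :
    ∑ k ∈ Finset.Icc (-M) M, ∑ l ∈ Finset.Icc (-M) M,
        (Tt A n k (Tt A m l v) - Tt A m l (Tt A n k v))
      = ((n:ℂ)-(m:ℂ)) • ∑ p ∈ Finset.Icc (-M) M, Tt A (n+m) p v
        + (if n = -m then (r:ℂ) * ((n:ℂ)^3 - (n:ℂ))/12 else 0) • v := by
  have h0an : 0 ≤ an := by omega
  have h0am : 0 ≤ am := by omega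
  have hN1 : (1:ℤ) ≤ N := by omega
  have hNn : n < N := by omega
  have hNm : m < N := by omega
  -- annihilation bound for the inner sum vector
  have hw0 : Ann A N₂ (∑ l ∈ Finset.Icc (-M) M, Tt A m l v) := by
    refine ann_sum _ _ fun l _ => ?_
    by_cases hl : m - N < l ∧ l < N
    · exact ann_mono (ann_Tt hcomm hv) (by omega)
    · have hz : Tt A m l v = 0 := Tt_eq_zero hv hN1 hNm (by omega)
      rw [hz]; exact ann_zero _
  -- Step 1 : restrict the outer sum to Icc (-K) K
  have step1 : ∑ k ∈ Finset.Icc (-M) M, ∑ l ∈ Finset.Icc (-M) M,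
        (Tt A n k (Tt A m l v) - Tt A m l (Tt A n k v))
      = ∑ k ∈ Finset.Icc (-K) K, ∑ l ∈ Finset.Icc (-M) M,
        (Tt A n k (Tt A m l v) - Tt A m l (Tt A n k v)) := by
    symm
    refine Finset.sum_subset (Finset.Icc_subset_Icc (by omega) (by omega)) ?_
    intro k hks hkI
    rw [Finset.mem_Icc] at hks hkI
    have hTnk : Tt A n k v = 0 := Tt_eq_zero hv hN1 hNn (by omega)
    rw [Finset.sum_sub_distrib, ← Tt_sum]
    rw [Tt_eq_zero hw0 (by omega) (by omega) (by omega), hTnk]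
    simp [Tt_zero]
  rw [step1]
  -- Step 2 : collapse the l-sum
  have step2 : ∀ k ∈ Finset.Icc (-K) K,
      ∑ l ∈ Finset.Icc (-M) M, (Tt A n k (Tt A m l v) - Tt A m l (Tt A n k v))
        = if n - k < 0 then Etil A n m v k else Etil A n m v (n - k) := by
    intro k hk
    rw [Finset.mem_Icc] at hk
    have hcase := ord_cases n k
    have hb1 : -(ordR n k) ∈ Finset.Icc (-M) M := by
      rw [Finset.mem_Icc]; rcases hcase with ⟨h1, h2⟩ | ⟨h1, h2⟩ <;> omega
    have hb2 : m + ordR n k ∈ Finset.Icc (-M) M := by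
      rw [Finset.mem_Icc]; rcases hcase with ⟨h1, h2⟩ | ⟨h1, h2⟩ <;> omega
    have hb3 : -(ordL n k) ∈ Finset.Icc (-M) M := by
      rw [Finset.mem_Icc]; rcases hcase with ⟨h1, h2⟩ | ⟨h1, h2⟩ <;> omega
    have hb4 : m + ordL n k ∈ Finset.Icc (-M) M := by
      rw [Finset.mem_Icc]; rcases hcase with ⟨h1, h2⟩ | ⟨h1, h2⟩ <;> omega
    rw [sum_l_collapse hcomm hm n k v hb1 hb2 hb3 hb4]
    unfold Etil ordL ordR
    split_ifs with hbr
    · rfl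
    · rw [show n - (n-k) = k from by omega]
  rw [Finset.sum_congr rfl step2]
  -- Step 3 : split the sum at n and reindex
  have hf1 : (Finset.Icc (-K) K).filter (fun k => n - k < 0) = Finset.Icc (n+1) K := by
    ext x; simp only [Finset.mem_filter, Finset.mem_Icc]; omega
  have hf2 : (Finset.Icc (-K) K).filter (fun k => ¬ n - k < 0) = Finset.Icc (-K) n := by
    ext x; simp only [Finset.mem_filter, Finset.mem_Icc]; omega
  rw [Finset.sum_ite, hf1, hf2]
  have hre : ∑ k ∈ Finset.Icc (-K) n, Etil A n m v (n - k)
      = ∑ j ∈ Finset.Icc 0 (n + K), Etil A n m v j := by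
    refine Finset.sum_nbij' (fun k => n - k) (fun j => n - j) ?_ ?_ ?_ ?_ ?_
    · intro a ha; simp only [Finset.mem_Icc] at *; omega
    · intro a ha; simp only [Finset.mem_Icc] at *; omega
    · intro a ha; omega
    · intro a ha; omega
    · intro a ha; rfl
  rw [hre]
  -- Step 4 : decompose via normal ordering
  have hdec : ∀ (R : Finset ℤ), ∑ j ∈ R, Etil A n m v j
      = ∑ j ∈ R, Etil2 A n m v j + (∑ j ∈ R, scal r n m j) • v := by
    intro R
    rw [Finset.sum_congr rfl (fun j _ => Etil_decomp hcomm n m j v),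
      Finset.sum_add_distrib, Finset.sum_smul]
  rw [hdec, hdec]
  -- Step 5 : the scalar part
  have hscal : (∑ j ∈ Finset.Icc (n+1) K, scal r n m j)
      + (∑ j ∈ Finset.Icc 0 (n+K), scal r n m j)
      = if n = -m then (r:ℂ) * ((n:ℂ)^3 - (n:ℂ))/12 else 0 :=
    central_sum hm hn1 hn2 hm1 hm2 (by omega)
  -- Step 6 : the operator part
  have hsym : ∑ j ∈ Finset.Icc 0 (n+K), Etil2 A n m v j
      = ∑ k ∈ Finset.Icc (-K) n, Etil2 A n m v k := by
    rw [Finset.sum_congr rfl (fun j _ => (Etil2_symm hcomm n m j v).symm)]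
    refine Finset.sum_nbij' (fun j => n - j) (fun k => n - k) ?_ ?_ ?_ ?_ ?_
    · intro a ha; simp only [Finset.mem_Icc] at *; omega
    · intro a ha; simp only [Finset.mem_Icc] at *; omega
    · intro a ha; omega
    · intro a ha; omega
    · intro a ha; rfl
  have hunion : ∑ j ∈ Finset.Icc (n+1) K, Etil2 A n m v j
      + ∑ k ∈ Finset.Icc (-K) n, Etil2 A n m v k
      = ∑ j ∈ Finset.Icc (-K) K, Etil2 A n m v j := by
    rw [add_comm, ← Finset.sum_union (by
      rw [Finset.disjoint_left]
      intro x hx1 hx2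
      rw [Finset.mem_Icc] at hx1 hx2; omega)]
    refine Finset.sum_congr ?_ (fun _ _ => rfl)
    ext x
    simp only [Finset.mem_union, Finset.mem_Icc]; omega
  have hop : ∑ j ∈ Finset.Icc (-K) K, Etil2 A n m v j
      = ((n:ℂ)-(m:ℂ)) • ∑ p ∈ Finset.Icc (-M) M, Tt A (n+m) p v := by
    unfold Etil2
    rw [Finset.sum_add_distrib]
    have hshift : ∑ j ∈ Finset.Icc (-K) K, (j:ℂ) • Tt A (n+m) (m+j) v
        = ∑ p ∈ Finset.Icc (-K+m) (K+m), (((p - m : ℤ)):ℂ) • Tt A (n+m) p v := by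
      refine Finset.sum_nbij' (fun j => m + j) (fun p => p - m) ?_ ?_ ?_ ?_ ?_
      · intro a ha; simp only [Finset.mem_Icc] at *; omega
      · intro a ha; simp only [Finset.mem_Icc] at *; omega
      · intro a ha; omega
      · intro a ha; omega
      · intro a ha; rw [show m + a - m = a from by omega]
    have hext1 : ∑ p ∈ Finset.Icc (-K+m) (K+m), (((p - m : ℤ)):ℂ) • Tt A (n+m) p v
        = ∑ p ∈ Finset.Icc (-M) M, (((p - m : ℤ)):ℂ) • Tt A (n+m) p v := by
      refine Finset.sum_subset (Finset.Icc_subset_Icc (by omega) (by omega)) ?_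
      intro p hp1 hp2
      rw [Finset.mem_Icc] at hp1 hp2
      rw [Tt_eq_zero hv hN1 (by omega) (by omega), smul_zero]
    have hext2 : ∑ j ∈ Finset.Icc (-K) K, (((n - j : ℤ)):ℂ) • Tt A (n+m) j v
        = ∑ p ∈ Finset.Icc (-M) M, (((n - p : ℤ)):ℂ) • Tt A (n+m) p v := by
      refine Finset.sum_subset (Finset.Icc_subset_Icc (by omega) (by omega)) ?_
      intro p hp1 hp2
      rw [Finset.mem_Icc] at hp1 hp2
      rw [Tt_eq_zero hv hN1 (by omega) (by omega), smul_zero]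
    rw [hshift, hext1, hext2, ← Finset.sum_add_distrib, Finset.smul_sum]
    refine Finset.sum_congr rfl fun p _ => ?_
    rw [← add_smul]
    congr 1
    push_cast; ring
  -- assemble
  rw [add_add_add_comm, hsym, hunion, hop, ← add_smul, hscal]

end master


section lin

omit hcomm in
lemma linQ_add (Q : Fin r → ℝ) (n : ℤ) (x y : V) :
    linQ A Q n (x + y) = linQ A Q n x + linQ A Q n y := by
  simp [linQ, Finset.sum_add_distrib, smul_add]

lemma G1 (Q : Fin r → ℝ) (n m : ℤ) (w : V) :
    linQ A Q n (linQ A Q m w) - linQ A Q m (linQ A Q n w)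
      = (if n = -m then
          ((-(((n:ℂ))+1)*(((m:ℂ))+1)*((n:ℂ)/2)) * ∑ j, ((Q j : ℝ):ℂ)^2) • w
        else 0) := by
  have hI : (-Complex.I*((n:ℂ)+1)) * (-Complex.I*((m:ℂ)+1))
      = -(((n:ℂ)+1)*(((m:ℂ))+1)) := by
    have h2 : Complex.I * Complex.I = -1 := Complex.I_mul_I
    ring_nf
    rw [Complex.I_sq]
    ring
  have e : ∀ (p q : ℤ), linQ A Q p (linQ A Q q w)
      = ∑ j, ∑ i, ((-Complex.I*((p:ℂ)+1)) * (-Complex.I*((q:ℂ)+1))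
          * (Q j : ℂ) * (Q i : ℂ)) • A p j (A q i w) := by
    intro p q
    simp only [linQ, map_smul, map_sum, Finset.smul_sum, smul_smul]
    refine Finset.sum_congr rfl fun j _ => Finset.sum_congr rfl fun i _ => ?_
    congr 1
    ring
  rw [e n m, e m n, Finset.sum_comm, ← Finset.sum_sub_distrib]
  have key : ∀ j : Fin r, (∑ i, ((-Complex.I*((n:ℂ)+1)) * (-Complex.I*((m:ℂ)+1))
          * (Q i : ℂ) * (Q j : ℂ)) • A n i (A m j w))
        - (∑ i, ((-Complex.I*((m:ℂ)+1)) * (-Complex.I*((n:ℂ)+1))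
          * (Q j : ℂ) * (Q i : ℂ)) • A m j (A n i w))
      = (if n = -m then ((-(((n:ℂ))+1)*(((m:ℂ))+1)*((n:ℂ)/2)) * ((Q j : ℂ))^2) • w else 0) := by
    intro j
    rw [← Finset.sum_sub_distrib]
    have pt : ∀ i : Fin r, ((-Complex.I*((n:ℂ)+1)) * (-Complex.I*((m:ℂ)+1))
          * (Q i : ℂ) * (Q j : ℂ)) • A n i (A m j w)
        - ((-Complex.I*((m:ℂ)+1)) * (-Complex.I*((n:ℂ)+1))
          * (Q j : ℂ) * (Q i : ℂ)) • A m j (A n i w)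
        = (if n = -m ∧ i = j then
            ((-(((n:ℂ))+1)*(((m:ℂ))+1)*((n:ℂ)/2)) * (Q i : ℂ) * (Q j : ℂ)) • w else 0) := by
      intro i
      have hc : ((-Complex.I*((m:ℂ)+1)) * (-Complex.I*((n:ℂ)+1)) * (Q j : ℂ) * (Q i : ℂ))
          = ((-Complex.I*((n:ℂ)+1)) * (-Complex.I*((m:ℂ)+1)) * (Q i : ℂ) * (Q j : ℂ)) := by ring
      rw [hc, ← smul_sub, hcomm n m i j w]
      by_cases h : n = -m ∧ i = j
      · rw [if_pos h, if_pos h, smul_smul]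
        congr 1
        rw [hI]; ring
      · rw [if_neg h, if_neg h, smul_zero]
    rw [Finset.sum_congr rfl (fun i _ => pt i), sum_delta']
    by_cases h : n = -m
    · rw [if_pos h, if_pos h]; congr 1; ring
    · rw [if_neg h, if_neg h]
  rw [Finset.sum_congr rfl (fun j _ => key j), sum_ite_const]
  by_cases h : n = -m
  · rw [if_pos h, if_pos h, ← Finset.sum_smul, ← Finset.mul_sum]
  · rw [if_neg h, if_neg h]

lemma G2a (Q : Fin r → ℝ) (n m : ℤ) {s : Finset ℤ} (h1 : -n ∈ s) (h2 : m + n ∈ s) (w : V) :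
    linQ A Q n (∑ l ∈ s, Tt A m l w) - ∑ l ∈ s, Tt A m l (linQ A Q n w)
      = (-Complex.I*((n:ℂ)+1)) • ((n:ℂ) • ∑ j, (Q j : ℂ) • A (m+n) j w) := by
  have hL : linQ A Q n (∑ l ∈ s, Tt A m l w)
      = (-Complex.I*((n:ℂ)+1)) • ∑ j, (Q j:ℂ) • ∑ l ∈ s, A n j (Tt A m l w) := by
    rw [linQ]
    congr 1
    exact Finset.sum_congr rfl fun j _ => by rw [map_sum]
  have hR : ∑ l ∈ s, Tt A m l (linQ A Q n w)
      = (-Complex.I*((n:ℂ)+1)) • ∑ j, (Q j:ℂ) • ∑ l ∈ s, Tt A m l (A n j w) := by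
    have hper : ∀ l, Tt A m l (linQ A Q n w)
        = (-Complex.I*((n:ℂ)+1)) • ∑ j, (Q j:ℂ) • Tt A m l (A n j w) := by
      intro l
      rw [linQ, Tt_smul]
      congr 1
      rw [Tt_sum]
      exact Finset.sum_congr rfl fun j _ => Tt_smul m l _ _
    rw [Finset.sum_congr rfl fun l _ => hper l, ← Finset.smul_sum]
    congr 1
    rw [Finset.sum_comm]
    exact Finset.sum_congr rfl fun j _ => by rw [Finset.smul_sum]
  rw [hL, hR, ← smul_sub]
  congr 1
  rw [← Finset.sum_sub_distrib, Finset.smul_sum]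
  refine Finset.sum_congr rfl fun j _ => ?_
  rw [← smul_sub, ← Finset.sum_sub_distrib]
  have hTA := TA_comm hcomm (n := m) (t := n) j h1 h2 w
  have h2' : ∑ l ∈ s, (A n j (Tt A m l w) - Tt A m l (A n j w)) = (n:ℂ) • A (m+n) j w := by
    rw [Finset.sum_congr rfl fun l _ => (neg_sub (Tt A m l (A n j w)) (A n j (Tt A m l w))).symm,
      Finset.sum_neg_distrib, hTA]
    module
  rw [h2']
  rw [smul_comm]

end lin


section key

lemma key (Q : Fin r → ℝ)
    (hann : ∀ v : V, ∃ N : ℤ, ∀ k ≥ N, ∀ j, A k j v = 0)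
    {m : ℤ} (hm : m ≠ 0) (n : ℤ) (v : V) :
    ssVirasoro Q A n (ssVirasoro Q A m v) - ssVirasoro Q A m (ssVirasoro Q A n v)
      = ((n : ℂ) - (m : ℂ)) • ssVirasoro Q A (n + m) v
        + (if n = -m then
            ((((r : ℂ) + 6 * ((∑ j, (Q j) ^ 2 : ℝ) : ℂ)) / 12) * ((n : ℂ) ^ 3 - n))
          else 0) • v := by
  obtain ⟨N₀, hN₀⟩ := hann v
  obtain ⟨an, hn1, hn2⟩ : ∃ a, n ≤ a ∧ -a ≤ n := ⟨|n|, le_abs_self n, neg_abs_le n⟩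
  obtain ⟨am, hm1, hm2⟩ : ∃ a, m ≤ a ∧ -a ≤ m := ⟨|m|, le_abs_self m, neg_abs_le m⟩
  have h0an : 0 ≤ an := by omega
  have h0am : 0 ≤ am := by omega
  have hN0le : N₀ ≤ max N₀ 1 := le_max_left _ _
  have h1le : (1:ℤ) ≤ max N₀ 1 := le_max_right _ _
  set N := max N₀ 1 + an + am + 2 with hNdef
  set N₂ := N + an + am + 2 with hN₂def
  set K := N₂ + an + am + 1 with hKdef
  set M := K + an + am + 1 with hMdef
  set s : Finset ℤ := Finset.Icc (-M) M with hsdef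
  have hv : Ann A N v := ann_mono hN₀ (by omega)
  have hssm : ssVirasoro Q A m v = linQ A Q m v + ∑ k ∈ s, Tt A m k v :=
    ssV_eq Q hv (by omega) (by omega) (by
      intro x hx; rw [Finset.mem_Ioo] at hx; rw [hsdef, Finset.mem_Icc]; omega)
  have hssn : ssVirasoro Q A n v = linQ A Q n v + ∑ k ∈ s, Tt A n k v :=
    ssV_eq Q hv (by omega) (by omega) (by
      intro x hx; rw [Finset.mem_Ioo] at hx; rw [hsdef, Finset.mem_Icc]; omega)
  have hssnm : ssVirasoro Q A (n+m) v = linQ A Q (n+m) v + ∑ p ∈ s, Tt A (n+m) p v :=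
    ssV_eq Q hv (by omega) (by omega) (by
      intro x hx; rw [Finset.mem_Ioo] at hx; rw [hsdef, Finset.mem_Icc]; omega)
  have hsumm : Ann A N₂ (∑ l ∈ s, Tt A m l v) := by
    refine ann_sum _ _ fun l _ => ?_
    by_cases hl : m - N < l ∧ l < N
    · exact ann_mono (ann_Tt hcomm hv) (by omega)
    · have hz : Tt A m l v = 0 := Tt_eq_zero hv (by omega) (by omega) (by omega)
      rw [hz]; exact ann_zero _
  have hsumn : Ann A N₂ (∑ l ∈ s, Tt A n l v) := by
    refine ann_sum _ _ fun l _ => ?_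
    by_cases hl : n - N < l ∧ l < N
    · exact ann_mono (ann_Tt hcomm hv) (by omega)
    · have hz : Tt A n l v = 0 := Tt_eq_zero hv (by omega) (by omega) (by omega)
      rw [hz]; exact ann_zero _
  have hannm : Ann A N₂ (ssVirasoro Q A m v) := by
    rw [hssm]
    exact ann_add (ann_mono (ann_linQ hcomm Q hv m) (by omega)) hsumm
  have hannn : Ann A N₂ (ssVirasoro Q A n v) := by
    rw [hssn]
    exact ann_add (ann_mono (ann_linQ hcomm Q hv n) (by omega)) hsumn
  have hout1 : ssVirasoro Q A n (ssVirasoro Q A m v)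
      = linQ A Q n (ssVirasoro Q A m v) + ∑ k ∈ s, Tt A n k (ssVirasoro Q A m v) :=
    ssV_eq Q hannm (by omega) (by omega) (by
      intro x hx; rw [Finset.mem_Ioo] at hx; rw [hsdef, Finset.mem_Icc]; omega)
  have hout2 : ssVirasoro Q A m (ssVirasoro Q A n v)
      = linQ A Q m (ssVirasoro Q A n v) + ∑ k ∈ s, Tt A m k (ssVirasoro Q A n v) :=
    ssV_eq Q hannn (by omega) (by omega) (by
      intro x hx; rw [Finset.mem_Ioo] at hx; rw [hsdef, Finset.mem_Icc]; omega)
  rw [hout1, hout2, hssm, hssn, hssnm]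
  rw [linQ_add, linQ_add]
  have hsplit1 : ∑ k ∈ s, Tt A n k (linQ A Q m v + ∑ l ∈ s, Tt A m l v)
      = ∑ k ∈ s, Tt A n k (linQ A Q m v) + ∑ k ∈ s, ∑ l ∈ s, Tt A n k (Tt A m l v) := by
    rw [← Finset.sum_add_distrib]
    exact Finset.sum_congr rfl fun k _ => by rw [Tt_add, Tt_sum]
  have hsplit2 : ∑ k ∈ s, Tt A m k (linQ A Q n v + ∑ l ∈ s, Tt A n l v)
      = ∑ k ∈ s, Tt A m k (linQ A Q n v) + ∑ k ∈ s, ∑ l ∈ s, Tt A m k (Tt A n l v) := by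
    rw [← Finset.sum_add_distrib]
    exact Finset.sum_congr rfl fun k _ => by rw [Tt_add, Tt_sum]
  rw [hsplit1, hsplit2]
  -- memberships
  have hmem1 : -n ∈ s := by rw [hsdef, Finset.mem_Icc]; omega
  have hmem2 : m + n ∈ s := by rw [hsdef, Finset.mem_Icc]; omega
  have hmem3 : -m ∈ s := by rw [hsdef, Finset.mem_Icc]; omega
  have hmem4 : n + m ∈ s := by rw [hsdef, Finset.mem_Icc]; omega
  -- component identities
  have hG1 : linQ A Q n (linQ A Q m v)
      = (if n = -m then
          ((-(((n:ℂ))+1)*(((m:ℂ))+1)*((n:ℂ)/2)) * ∑ j, ((Q j : ℝ):ℂ)^2) • v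
        else 0) + linQ A Q m (linQ A Q n v) :=
    sub_eq_iff_eq_add.mp (G1 hcomm Q n m v)
  have hG2a : linQ A Q n (∑ l ∈ s, Tt A m l v)
      = (-Complex.I*((n:ℂ)+1)) • ((n:ℂ) • ∑ j, (Q j : ℂ) • A (m+n) j v)
        + ∑ l ∈ s, Tt A m l (linQ A Q n v) :=
    sub_eq_iff_eq_add.mp (G2a hcomm Q n m hmem1 hmem2 v)
  have hG2b : linQ A Q m (∑ l ∈ s, Tt A n l v)
      = (-Complex.I*((m:ℂ)+1)) • ((m:ℂ) • ∑ j, (Q j : ℂ) • A (n+m) j v)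
        + ∑ l ∈ s, Tt A n l (linQ A Q m v) :=
    sub_eq_iff_eq_add.mp (G2a hcomm Q m n hmem3 hmem4 v)
  have hG3' : ∑ k ∈ s, ∑ l ∈ s, Tt A n k (Tt A m l v)
      = (((n:ℂ)-(m:ℂ)) • ∑ p ∈ s, Tt A (n+m) p v
          + (if n = -m then (r:ℂ) * ((n:ℂ)^3 - (n:ℂ))/12 else 0) • v)
        + ∑ k ∈ s, ∑ l ∈ s, Tt A m k (Tt A n l v) := by
    refine sub_eq_iff_eq_add.mp ?_
    have hswap : ∑ k ∈ s, ∑ l ∈ s, Tt A m k (Tt A n l v)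
        = ∑ k ∈ s, ∑ l ∈ s, Tt A m l (Tt A n k v) := Finset.sum_comm
    rw [hswap, ← Finset.sum_sub_distrib]
    rw [Finset.sum_congr rfl fun k _ => (Finset.sum_sub_distrib _ _).symm]
    exact G3 hcomm hm hv hn1 hn2 hm1 hm2 (by omega) hN₂def hKdef hMdef
  rw [hG1, hG2a, hG2b, hG3']
  -- final algebra
  have hQcast : ((∑ j, (Q j)^2 : ℝ) : ℂ) = ∑ j, ((Q j : ℝ):ℂ)^2 := by push_cast; rfl
  rw [hQcast]
  have hmn : m + n = n + m := by omega
  have hlin : linQ A Q (n+m) v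
      = (-Complex.I*((((n+m):ℤ):ℂ)+1)) • ∑ j, (Q j:ℂ) • A (n+m) j v := rfl
  rw [hmn, hlin]
  by_cases h : n = -m
  · subst h
    rw [if_pos rfl, if_pos rfl, if_pos rfl]
    push_cast
    module
  · rw [if_neg h, if_neg h, if_neg h]
    push_cast
    module

end key

end comm

end SSAux

/-- Segal–Sugawara construction: if the `A_n` satisfy the Heisenberg commutation
relations `[⟨u,A_n⟩, ⟨v,A_m⟩] = ⟨u,v⟩(n/2)δ_{n,-m}`, are adjoint to each other in the
sense `A_n* = A_{-n}` for `n ≠ 0` and `A_0* = A_0 - iQ` (componentwise), and each vector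
is annihilated by all `A_n` with `n` large (Fock space property), then the modes
`L_n = -iQ(n+1)·A_n + Σ_m :⟨A_{n-m},A_m⟩:` satisfy the Virasoro relations
`[L_n, L_m] = (n-m)L_{n+m} + (c/12)(n³-n)δ_{n,-m}` with central charge
`c = r + 6⟨Q,Q⟩`. -/
theorem segal_sugawara_virasoro_relations
    {V : Type*} [NormedAddCommGroup V] [InnerProductSpace ℂ V] {r : ℕ}
    (Q : Fin r → ℝ) (A : ℤ → Fin r → V →ₗ[ℂ] V)
    (hcomm : ∀ (n m : ℤ) (i j : Fin r) (v : V),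
      A n i (A m j v) - A m j (A n i v)
        = if n = -m ∧ i = j then ((n : ℂ) / 2) • v else 0)
    (hadj : ∀ (n : ℤ), n ≠ 0 → ∀ (j : Fin r) (v w : V),
      (inner ℂ (A n j v) w : ℂ) = inner ℂ v (A (-n) j w))
    (hadj0 : ∀ (j : Fin r) (v w : V),
      (inner ℂ (A 0 j v) w : ℂ)
        = inner ℂ v (A 0 j w) - Complex.I * (Q j : ℂ) * inner ℂ v w)
    (hann : ∀ v : V, ∃ N : ℤ, ∀ n ≥ N, ∀ j, A n j v = 0)
    (n m : ℤ) (v : V) :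
    ssVirasoro Q A n (ssVirasoro Q A m v) - ssVirasoro Q A m (ssVirasoro Q A n v)
      = ((n : ℂ) - (m : ℂ)) • ssVirasoro Q A (n + m) v
        + (if n = -m then
            ((((r : ℂ) + 6 * ((∑ j, (Q j) ^ 2 : ℝ) : ℂ)) / 12) * ((n : ℂ) ^ 3 - n))
          else 0) • v := by
  classical
  by_cases hm : m = 0
  · subst hm
    by_cases hn : n = 0
    · subst hn
      simp
    · have h := SSAux.key hcomm Q hann hn 0 v
      rw [if_neg (show ¬((0:ℤ) = -n) by omega), zero_add] at h
      rw [if_neg (show ¬(n = -(0:ℤ)) by omega), add_zero]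
      rw [← neg_sub (ssVirasoro Q A 0 (ssVirasoro Q A n v))
        (ssVirasoro Q A n (ssVirasoro Q A 0 v)), h]
      push_cast
      module
  · exact SSAux.key hcomm Q hann hm n v
end

section
/- Under the neutrality condition Σ_{k=1}^N α_k = 2Q, the function C(z₁,…,z_N) = ∏_{k<l}|z_k - z_l|^{-⟨α_k,α_l⟩} is Möbius covariant: for every Möbius transformation ψ of the Riemann sphere (with all ψ(z_k) finite), C(z₁,…,z_N) = ∏_{k=1}^N |ψ'(z_k)|^{2Δ_{α_k}} · C(ψ(z₁),…,ψ(z_N)), where Δ_α = ⟨α/2, Q - α/2⟩. -/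
open scoped BigOperators

/-- Möbius covariance of free-field correlation functions: under the neutrality condition
`Σ_k α_k = 2Q`, the function `C(z₁,…,z_N) = ∏_{k<l}|z_k - z_l|^{-⟨α_k,α_l⟩}` satisfies
`C(z₁,…,z_N) = ∏_k |ψ'(z_k)|^{2Δ_{α_k}} · C(ψ(z₁),…,ψ(z_N))` for every Möbius map
`ψ(z) = (az+b)/(cz+d)` with `ad - bc = 1` (so `ψ'(z) = 1/(cz+d)²`), all `ψ(z_k)` finite,
and `Δ_α = ⟨α/2, Q - α/2⟩`. Inner products are in coordinates. -/
theorem freefield_correlation_mobius_covariance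
    (N r : ℕ) (α : Fin N → Fin r → ℝ) (Q : Fin r → ℝ) (z : Fin N → ℂ)
    (a b c d : ℂ) (habcd : a * d - b * c = 1)
    (hz : Function.Injective z) (hden : ∀ k, c * z k + d ≠ 0)
    (hneutral : ∀ j, ∑ k, α k j = 2 * Q j) :
    let ψ : ℂ → ℂ := fun w => (a * w + b) / (c * w + d)
    let ψ' : ℂ → ℂ := fun w => 1 / (c * w + d) ^ 2
    let C : (Fin N → ℂ) → ℝ := fun w =>
      ∏ k, ∏ l ∈ Finset.univ.filter (fun l => k < l),
        ‖w k - w l‖ ^ (-(∑ j, α k j * α l j))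
    C z = (∏ k, ‖ψ' (z k)‖
              ^ (2 * (∑ j, (α k j / 2) * (Q j - α k j / 2))))
            * C (fun k => ψ (z k)) := by
  intro ψ ψ' C
  -- abbreviations
  have habs : ∀ k, 0 < ‖c * z k + d‖ := fun k => norm_pos_iff.2 (hden k)
  have hzz : ∀ k l : Fin N, k < l → 0 < ‖z k - z l‖ := fun k l h =>
    norm_pos_iff.2 (sub_ne_zero.2 (fun e => (ne_of_lt h) (hz e)))
  -- key algebraic identity
  have hkey : ∀ k l : Fin N, ‖ψ (z k) - ψ (z l)‖
      = ‖z k - z l‖ / (‖c * z k + d‖ * ‖c * z l + d‖) := by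
    intro k l
    have h : ψ (z k) - ψ (z l) = (z k - z l) / ((c * z k + d) * (c * z l + d)) := by
      show (a * z k + b) / (c * z k + d) - (a * z l + b) / (c * z l + d) = _
      rw [div_sub_div _ _ (hden k) (hden l), div_eq_div_iff (mul_ne_zero (hden k) (hden l))
        (mul_ne_zero (hden k) (hden l))]
      linear_combination (z k - z l) * (c * z k + d) * (c * z l + d) * habcd
    rw [h, norm_div, norm_mul]
  have hψzz : ∀ k l : Fin N, k < l → 0 < ‖ψ (z k) - ψ (z l)‖ := by
    intro k l h
    rw [hkey]
    exact div_pos (hzz k l h) (mul_pos (habs k) (habs l))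
  have hψ'abs : ∀ k, ‖ψ' (z k)‖ = 1 / (‖c * z k + d‖) ^ 2 := by
    intro k
    show ‖1 / (c * z k + d) ^ 2‖ = _
    rw [norm_div, norm_one, norm_pow]
  have hψ'pos : ∀ k, 0 < ‖ψ' (z k)‖ := by
    intro k; rw [hψ'abs]; exact div_pos one_pos (pow_pos (habs k) 2)
  -- positivity of the correlation products
  have hCpos : ∀ w : Fin N → ℂ, (∀ k l : Fin N, k < l → 0 < ‖w k - w l‖) →
      0 < C w := by
    intro w hw
    refine Finset.prod_pos fun k _ => Finset.prod_pos fun l hl => ?_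
    exact Real.rpow_pos_of_pos (hw k l (Finset.mem_filter.1 hl).2) _
  have hCzpos : 0 < C z := hCpos z hzz
  have hCψpos : 0 < C (fun k => ψ (z k)) := hCpos _ hψzz
  have hPpos : 0 < ∏ k, (‖ψ' (z k)‖)
      ^ (2 * (∑ j, (α k j / 2) * (Q j - α k j / 2))) :=
    Finset.prod_pos fun k _ => Real.rpow_pos_of_pos (hψ'pos k) _
  -- reduce to equality of logarithms
  have hRpos : 0 < (∏ k, (‖ψ' (z k)‖)
      ^ (2 * (∑ j, (α k j / 2) * (Q j - α k j / 2)))) * C (fun k => ψ (z k)) :=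
    mul_pos hPpos hCψpos
  refine Real.log_injOn_pos (Set.mem_Ioi.2 hCzpos) (Set.mem_Ioi.2 hRpos) ?_
  -- log of a correlation product
  have hlogC : ∀ w : Fin N → ℂ, (∀ k l : Fin N, k < l → 0 < ‖w k - w l‖) →
      Real.log (C w) = ∑ k, ∑ l ∈ Finset.univ.filter (fun l => k < l),
        (-(∑ j, α k j * α l j)) * Real.log (‖w k - w l‖) := by
    intro w hw
    rw [Real.log_prod]
    · refine Finset.sum_congr rfl fun k _ => ?_
      rw [Real.log_prod]
      · exact Finset.sum_congr rfl fun l hl =>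
          Real.log_rpow (hw k l (Finset.mem_filter.1 hl).2) _
      · exact fun l hl => ne_of_gt
          (Real.rpow_pos_of_pos (hw k l (Finset.mem_filter.1 hl).2) _)
    · exact fun k _ => ne_of_gt (Finset.prod_pos fun l hl =>
        Real.rpow_pos_of_pos (hw k l (Finset.mem_filter.1 hl).2) _)
  rw [Real.log_mul (ne_of_gt hPpos) (ne_of_gt hCψpos), hlogC z hzz, hlogC _ hψzz,
    Real.log_prod (fun k _ => ne_of_gt (Real.rpow_pos_of_pos (hψ'pos k) _))]
  -- abbreviations for the linear-algebraic identity
  set u : Fin N → ℝ := fun k => Real.log (‖c * z k + d‖) with hu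
  -- log of the derivative factors
  have hlogψ' : ∀ k, Real.log ((‖ψ' (z k)‖)
      ^ (2 * (∑ j, (α k j / 2) * (Q j - α k j / 2))))
      = (2 * (∑ j, (α k j / 2) * (Q j - α k j / 2))) * (-(2 * u k)) := by
    intro k
    rw [Real.log_rpow (hψ'pos k), hψ'abs, one_div, Real.log_inv, Real.log_pow]
    norm_num
    exact Or.inl rfl
  -- log of transformed distances
  have hlogd : ∀ k l : Fin N, k < l →
      Real.log (‖ψ (z k) - ψ (z l)‖)
      = Real.log (‖z k - z l‖) - (u k + u l) := by
    intro k l h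
    rw [hkey, Real.log_div (ne_of_gt (hzz k l h)) (ne_of_gt (mul_pos (habs k) (habs l))),
      Real.log_mul (ne_of_gt (habs k)) (ne_of_gt (habs l))]
  -- the pairing identity
  have hpair : ∑ k, ∑ l ∈ Finset.univ.filter (fun l => k < l),
      (∑ j, α k j * α l j) * (u k + u l)
      = ∑ k, (2 * (2 * (∑ j, (α k j / 2) * (Q j - α k j / 2)))) * u k := by
    have hfil : ∀ k : Fin N, Finset.univ.filter (fun l => k < l) = Finset.Ioi k := by
      intro k; ext l; simp
    have hoff := Finset.sum_sum_Ioi_add_eq_sum_sum_off_diag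
      (fun x y => (∑ j, α x j * α y j) * u y)
    calc ∑ k, ∑ l ∈ Finset.univ.filter (fun l => k < l),
          (∑ j, α k j * α l j) * (u k + u l)
        = ∑ k, ∑ l ∈ Finset.Ioi k,
            ((∑ j, α l j * α k j) * u k + (∑ j, α k j * α l j) * u l) := by
          refine Finset.sum_congr rfl fun k _ => ?_
          rw [hfil]
          refine Finset.sum_congr rfl fun l _ => ?_
          have : (∑ j, α l j * α k j) = ∑ j, α k j * α l j :=
            Finset.sum_congr rfl fun j _ => mul_comm _ _
          rw [this]; ring
      _ = ∑ k, ∑ l ∈ ({k} : Finset (Fin N))ᶜ, (∑ j, α l j * α k j) * u k := by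
          convert hoff using 2
      _ = ∑ k, (2 * (2 * (∑ j, (α k j / 2) * (Q j - α k j / 2)))) * u k := by
          refine Finset.sum_congr rfl fun k _ => ?_
          rw [← Finset.sum_mul]
          congr 1
          have hcompl : (∑ l ∈ ({k} : Finset (Fin N))ᶜ, ∑ j, α l j * α k j)
              + ∑ l ∈ ({k} : Finset (Fin N)), ∑ j, α l j * α k j
              = ∑ l, ∑ j, α l j * α k j := Finset.sum_compl_add_sum _ _
          rw [Finset.sum_singleton] at hcompl
          have hfull : ∑ l, ∑ j, α l j * α k j = ∑ j, (2 * Q j) * α k j := by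
            rw [Finset.sum_comm]
            refine Finset.sum_congr rfl fun j _ => ?_
            rw [← Finset.sum_mul, hneutral j]
          have : (∑ l ∈ ({k} : Finset (Fin N))ᶜ, ∑ j, α l j * α k j)
              = (∑ j, (2 * Q j) * α k j) - ∑ j, α k j * α k j := by
            rw [← hfull]; linarith [hcompl]
          rw [this, Finset.mul_sum, Finset.mul_sum, ← Finset.sum_sub_distrib]
          exact Finset.sum_congr rfl fun j _ => by ring
  -- assemble
  have h1 : ∑ k, ∑ l ∈ Finset.univ.filter (fun l => k < l),
      (-(∑ j, α k j * α l j)) * Real.log (‖ψ (z k) - ψ (z l)‖)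
      = (∑ k, ∑ l ∈ Finset.univ.filter (fun l => k < l),
          (-(∑ j, α k j * α l j)) * Real.log (‖z k - z l‖))
        + ∑ k, ∑ l ∈ Finset.univ.filter (fun l => k < l),
            (∑ j, α k j * α l j) * (u k + u l) := by
    rw [← Finset.sum_add_distrib]
    refine Finset.sum_congr rfl fun k _ => ?_
    rw [← Finset.sum_add_distrib]
    refine Finset.sum_congr rfl fun l hl => ?_
    rw [hlogd k l (Finset.mem_filter.1 hl).2]
    ring
  have h2 : ∑ k, (2 * (∑ j, (α k j / 2) * (Q j - α k j / 2))) * (-(2 * u k))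
      = -∑ k, (2 * (2 * (∑ j, (α k j / 2) * (Q j - α k j / 2)))) * u k := by
    rw [← Finset.sum_neg_distrib]
    exact Finset.sum_congr rfl fun k _ => by ring
  calc ∑ k, ∑ l ∈ Finset.univ.filter (fun l => k < l),
        (-(∑ j, α k j * α l j)) * Real.log (‖z k - z l‖)
      = (∑ k, (2 * (∑ j, (α k j / 2) * (Q j - α k j / 2))) * (-(2 * u k)))
        + ((∑ k, ∑ l ∈ Finset.univ.filter (fun l => k < l),
            (-(∑ j, α k j * α l j)) * Real.log (‖z k - z l‖))
          + ∑ k, ∑ l ∈ Finset.univ.filter (fun l => k < l),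
              (∑ j, α k j * α l j) * (u k + u l)) := by
        rw [h2, hpair]; ring
    _ = (∑ k, Real.log ((‖ψ' (z k)‖)
          ^ (2 * (∑ j, (α k j / 2) * (Q j - α k j / 2)))))
        + ∑ k, ∑ l ∈ Finset.univ.filter (fun l => k < l),
            (-(∑ j, α k j * α l j)) * Real.log (‖ψ (z k) - ψ (z l)‖) := by
        rw [h1]
        congr 1
        exact (Finset.sum_congr rfl fun k _ => (hlogψ' k)).symm
end
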